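/- (Exact second permutation moment, symmetric case.) Let N ≥ 4 and let a = (a_{ij})_{1≤i,j≤N}, b = (b_{ij})_{1≤i,j≤N} be real arrays with a_{ij} = a_{ji} and b_{ij} = b_{ji} for all i, j. With Γ(π) = ∑_{i,j} a_{ij} b_{π(i)π(j)} and π uniform over the N! permutations of {1,…,N}, one has E[Γ^2] = ((N−4)!/N!)(∑'_{j,k,s,u} a_{jk} a_{su})(∑'_{i,l,r,t} b_{il} b_{rt}) + (4(N−3)!/N!)(∑'_{j,k,u} a_{jk} a_{ju})(∑'_{i,l,t} b_{il} b_{it}) + (2(N−3)!/N!)(∑'_{j,s,u} a_{jj} a_{su})(∑'_{i,r,t} b_{ii} b_{rt}) + (2(N−2)!/N!)(∑'_{j,k} a_{jk}^2)(∑'_{i,l} b_{il}^2) + ((N−2)!/N!)(∑'_{j,s} a_{jj} a_{ss})(∑'_{i,r} b_{ii} b_{rr}) + (4(N−2)!/N!)(∑'_{j,u} a_{jj} a_{ju})(∑'_{i,t} b_{ii} b_{it}) + ((N−1)!/N!)(∑_j a_{jj}^2)(∑_i b_{ii}^2), where ∑' denotes summation over pairwise distinct values of all displayed subscripts. -/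
import Mathlib


open MeasureTheory ProbabilityTheory Filter Finset Topology

/-- Generalized correlation coefficient `Γ(π) = ∑_{i,j} a_{ij} b_{π(i)π(j)}`. -/
noncomputable def gammaStat (N : ℕ) (a b : Fin N → Fin N → ℝ) (π : Equiv.Perm (Fin N)) : ℝ :=
  ∑ i, ∑ j, a i j * b (π i) (π j)

/-- Expectation of a statistic of a uniformly random permutation of `{1,…,N}`. -/
noncomputable def permE (N : ℕ) (f : Equiv.Perm (Fin N) → ℝ) : ℝ :=
  (∑ π : Equiv.Perm (Fin N), f π) / (N.factorial : ℝ)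

/-- Law of a real statistic of a uniformly random permutation of `{1,…,N}`. -/
noncomputable def permLaw (N : ℕ) (f : Equiv.Perm (Fin N) → ℝ) : ProbabilityMeasure ℝ :=
  ⟨((PMF.uniformOfFintype (Equiv.Perm (Fin N))).map f).toMeasure, inferInstance⟩

/-- The standard normal distribution `N(0,1)` as a probability measure on `ℝ`. -/
noncomputable def stdGaussian : ProbabilityMeasure ℝ := ⟨gaussianReal 0 1, inferInstance⟩

/-- `x_N ≍ y_N` : there are constants `0 < c ≤ C` with `c y_N ≤ x_N ≤ C y_N` for all large `N`. -/
def AsympEquiv (x y : ℕ → ℝ) : Prop :=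
  ∃ c C : ℝ, 0 < c ∧ c ≤ C ∧ ∀ᶠ N in atTop, c * y N ≤ x N ∧ x N ≤ C * y N

/-- `max_{i,j} |a_{ij}|`. -/
noncomputable def arrMax (N : ℕ) (a : Fin N → Fin N → ℝ) : ℝ := ⨆ i, ⨆ j, |a i j|

section GCAux

open Finset

variable {N : ℕ}

/-! ### Counting permutations with prescribed values -/

lemma gc_perm_pattern_card {n : ℕ} (x y : Fin n → Fin N)
    (hpat : ∀ q q', x q = x q' ↔ y q = y q') :
    (Finset.univ.filter fun π : Equiv.Perm (Fin N) => ∀ q, π (x q) = y q).card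
      = (N - (Finset.univ.image x).card).factorial := by
  classical
  have hmemx : ∀ q, ∃ p, x p = x q := fun q => ⟨q, rfl⟩
  have hmemy : ∀ q, ∃ p, y p = y q := fun q => ⟨q, rfl⟩
  let e : {z : Fin N // ∃ q, x q = z} ≃ {z : Fin N // ∃ q, y q = z} :=
  { toFun := fun z => ⟨y (Classical.choose z.2), Classical.choose z.2, rfl⟩
    invFun := fun z => ⟨x (Classical.choose z.2), Classical.choose z.2, rfl⟩
    left_inv := by
      rintro ⟨z, hz⟩
      apply Subtype.ext
      have h1 : x (Classical.choose hz) = z := Classical.choose_spec hz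
      have h2 : y (Classical.choose (hmemy (Classical.choose hz)))
          = y (Classical.choose hz) :=
        Classical.choose_spec (hmemy (Classical.choose hz))
      have h3 := (hpat _ _).mpr h2
      simpa [h1] using h3.trans h1
    right_inv := by
      rintro ⟨z, hz⟩
      apply Subtype.ext
      have h1 : y (Classical.choose hz) = z := Classical.choose_spec hz
      have h2 : x (Classical.choose (hmemx (Classical.choose hz)))
          = x (Classical.choose hz) :=
        Classical.choose_spec (hmemx (Classical.choose hz))
      have h3 := (hpat _ _).mp h2
      simpa [h1] using h3.trans h1 }
  let π₀ : Equiv.Perm (Fin N) := e.extendSubtype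
  have hπ₀ : ∀ q, π₀ (x q) = y q := by
    intro q
    have hx : ∃ p, x p = x q := ⟨q, rfl⟩
    have := e.extendSubtype_apply_of_mem (x q) hx
    rw [show π₀ (x q) = e.extendSubtype (x q) from rfl, this]
    have h2 : x (Classical.choose hx) = x q := Classical.choose_spec hx
    exact (hpat _ _).mp h2
  have hbij : (Finset.univ.filter fun π : Equiv.Perm (Fin N) => ∀ q, π (x q) = y q).card
      = (Finset.univ.filter fun τ : Equiv.Perm (Fin N) => ∀ q, τ (x q) = x q).card := by
    apply Finset.card_bij' (fun π _ => π₀⁻¹ * π) (fun τ _ => π₀ * τ)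
    · intro π hπ
      simp only [mem_filter, mem_univ, true_and] at hπ ⊢
      intro q
      simp [Equiv.Perm.mul_apply, hπ q, ← hπ₀ q]
    · intro τ hτ
      simp only [mem_filter, mem_univ, true_and] at hτ ⊢
      intro q
      simp [Equiv.Perm.mul_apply, hτ q, hπ₀ q]
    · intro π _; group
    · intro τ _; group
  rw [hbij]
  have hsub : (Finset.univ.filter fun τ : Equiv.Perm (Fin N) => ∀ q, τ (x q) = x q).card
      = Fintype.card {τ : Equiv.Perm (Fin N) // ∀ q, τ (x q) = x q} := by
    rw [Fintype.card_subtype]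
  rw [hsub]
  have e2 : {τ : Equiv.Perm (Fin N) // ∀ q, τ (x q) = x q}
      ≃ Equiv.Perm {z : Fin N // ¬ (z ∈ Finset.univ.image x)} := by
    refine Equiv.trans (Equiv.subtypeEquivRight ?_)
      (Equiv.Perm.subtypeEquivSubtypePerm (fun z => ¬ (z ∈ Finset.univ.image x))).symm
    intro τ
    constructor
    · intro h z hz
      rw [not_not, Finset.mem_image] at hz
      obtain ⟨q, -, rfl⟩ := hz
      exact h q
    · intro h q
      exact h (x q) (by simp)
  rw [Fintype.card_congr e2, Fintype.card_perm]
  congr 1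
  rw [Fintype.card_subtype_compl, Fintype.card_fin, Fintype.card_coe]

lemma gc_card_perm_of_inj {n : ℕ} {x y : Fin n → Fin N} (hx : Function.Injective x)
    (hy : Function.Injective y) :
    (Finset.univ.filter fun π : Equiv.Perm (Fin N) => ∀ q, π (x q) = y q).card
      = (N - n).factorial := by
  rw [gc_perm_pattern_card x y (fun q q' => by rw [hx.eq_iff, hy.eq_iff]),
    Finset.card_image_of_injective _ hx, Finset.card_univ, Fintype.card_fin]

lemma gc_card4 (j k s u i l r t : Fin N) (hjk : j ≠ k) (hjs : j ≠ s) (hju : j ≠ u)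
    (hks : k ≠ s) (hku : k ≠ u) (hsu : s ≠ u) :
    ((Finset.univ.filter fun π : Equiv.Perm (Fin N) =>
        π u = t ∧ π s = r ∧ π k = l ∧ π j = i).card : ℝ)
      = if i ≠ l ∧ i ≠ r ∧ i ≠ t ∧ l ≠ r ∧ l ≠ t ∧ r ≠ t
          then ((N - 4).factorial : ℝ) else 0 := by
  have hfil : (Finset.univ.filter fun π : Equiv.Perm (Fin N) =>
      π u = t ∧ π s = r ∧ π k = l ∧ π j = i)
      = (Finset.univ.filter fun π : Equiv.Perm (Fin N) =>
          ∀ q, π (![u,s,k,j] q) = ![t,r,l,i] q) := by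
    apply Finset.filter_congr; intro π _
    simp [Fin.forall_fin_succ, and_assoc]
  split_ifs with hy
  · obtain ⟨h1, h2, h3, h4, h5, h6⟩ := hy
    rw [hfil, gc_card_perm_of_inj (by intro q q' h; fin_cases q <;> fin_cases q' <;> simp_all)
      (by intro q q' h; fin_cases q <;> fin_cases q' <;> simp_all)]
  · norm_cast
    rw [Finset.card_eq_zero, Finset.filter_eq_empty_iff]
    rintro π - ⟨h1, h2, h3, h4⟩
    subst h1; subst h2; subst h3; subst h4
    exact hy ⟨π.injective.ne hjk, π.injective.ne hjs, π.injective.ne hju,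
      π.injective.ne hks, π.injective.ne hku, π.injective.ne hsu⟩

lemma gc_card3 (j k s i l r : Fin N) (hjk : j ≠ k) (hjs : j ≠ s) (hks : k ≠ s) :
    ((Finset.univ.filter fun π : Equiv.Perm (Fin N) =>
        π s = r ∧ π k = l ∧ π j = i).card : ℝ)
      = if i ≠ l ∧ i ≠ r ∧ l ≠ r then ((N - 3).factorial : ℝ) else 0 := by
  have hfil : (Finset.univ.filter fun π : Equiv.Perm (Fin N) =>
      π s = r ∧ π k = l ∧ π j = i)
      = (Finset.univ.filter fun π : Equiv.Perm (Fin N) =>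
          ∀ q, π (![s,k,j] q) = ![r,l,i] q) := by
    apply Finset.filter_congr; intro π _
    simp [Fin.forall_fin_succ, and_assoc]
  split_ifs with hy
  · obtain ⟨h1, h2, h3⟩ := hy
    rw [hfil, gc_card_perm_of_inj (by intro q q' h; fin_cases q <;> fin_cases q' <;> simp_all)
      (by intro q q' h; fin_cases q <;> fin_cases q' <;> simp_all)]
  · norm_cast
    rw [Finset.card_eq_zero, Finset.filter_eq_empty_iff]
    rintro π - ⟨h1, h2, h3⟩
    subst h1; subst h2; subst h3
    exact hy ⟨π.injective.ne hjk, π.injective.ne hjs, π.injective.ne hks⟩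

lemma gc_card2 (j k i l : Fin N) (hjk : j ≠ k) :
    ((Finset.univ.filter fun π : Equiv.Perm (Fin N) => π k = l ∧ π j = i).card : ℝ)
      = if i ≠ l then ((N - 2).factorial : ℝ) else 0 := by
  have hfil : (Finset.univ.filter fun π : Equiv.Perm (Fin N) => π k = l ∧ π j = i)
      = (Finset.univ.filter fun π : Equiv.Perm (Fin N) =>
          ∀ q, π (![k,j] q) = ![l,i] q) := by
    apply Finset.filter_congr; intro π _
    simp [Fin.forall_fin_succ, and_assoc]
  split_ifs with hy
  · rw [hfil, gc_card_perm_of_inj (by intro q q' h; fin_cases q <;> fin_cases q' <;> simp_all)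
      (by intro q q' h; fin_cases q <;> fin_cases q' <;> simp_all)]
  · norm_cast
    rw [Finset.card_eq_zero, Finset.filter_eq_empty_iff]
    rintro π - ⟨h1, h2⟩
    subst h1; subst h2
    exact hy (π.injective.ne hjk)

lemma gc_card1 (j i : Fin N) :
    ((Finset.univ.filter fun π : Equiv.Perm (Fin N) => π j = i).card : ℝ)
      = ((N - 1).factorial : ℝ) := by
  have hfil : (Finset.univ.filter fun π : Equiv.Perm (Fin N) => π j = i)
      = (Finset.univ.filter fun π : Equiv.Perm (Fin N) =>
          ∀ q, π (![j] q) = ![i] q) := by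
    apply Finset.filter_congr; intro π _
    simp [Fin.forall_fin_succ]
  rw [hfil, gc_card_perm_of_inj (fun q q' _ => Subsingleton.elim q q')
      (fun q q' _ => Subsingleton.elim q q')]
/-! ### Expansion of permutation sums -/

private lemma gc_ite_count (P : Equiv.Perm (Fin N) → Prop) [DecidablePred P] (c : ℝ) :
    (∑ π : Equiv.Perm (Fin N), if P π then c else 0)
      = ((Finset.univ.filter P).card : ℝ) * c := by
  rw [← Finset.sum_filter, Finset.sum_const, nsmul_eq_mul]

lemma gc_expand4 (f : Fin N → Fin N → Fin N → Fin N → ℝ) (j k s u : Fin N) :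
    (∑ π : Equiv.Perm (Fin N), f (π j) (π k) (π s) (π u))
      = ∑ i, ∑ l, ∑ r, ∑ t, ((Finset.univ.filter fun π : Equiv.Perm (Fin N) =>
          π u = t ∧ π s = r ∧ π k = l ∧ π j = i).card : ℝ) * f i l r t := by
  classical
  have hcol : ∀ π : Equiv.Perm (Fin N),
      f (π j) (π k) (π s) (π u) = ∑ i, ∑ l, ∑ r, ∑ t,
        if π u = t ∧ π s = r ∧ π k = l ∧ π j = i then f i l r t else 0 := by
    intro π
    simp [ite_and, Finset.sum_ite_eq]
  simp_rw [hcol]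
  rw [Finset.sum_comm]
  refine Finset.sum_congr rfl fun i _ => ?_
  rw [Finset.sum_comm]
  refine Finset.sum_congr rfl fun l _ => ?_
  rw [Finset.sum_comm]
  refine Finset.sum_congr rfl fun r _ => ?_
  rw [Finset.sum_comm]
  exact Finset.sum_congr rfl fun t _ => gc_ite_count _ _

lemma gc_expand3 (f : Fin N → Fin N → Fin N → ℝ) (j k s : Fin N) :
    (∑ π : Equiv.Perm (Fin N), f (π j) (π k) (π s))
      = ∑ i, ∑ l, ∑ r, ((Finset.univ.filter fun π : Equiv.Perm (Fin N) =>
          π s = r ∧ π k = l ∧ π j = i).card : ℝ) * f i l r := by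
  classical
  have hcol : ∀ π : Equiv.Perm (Fin N),
      f (π j) (π k) (π s) = ∑ i, ∑ l, ∑ r,
        if π s = r ∧ π k = l ∧ π j = i then f i l r else 0 := by
    intro π
    simp [ite_and, Finset.sum_ite_eq]
  simp_rw [hcol]
  rw [Finset.sum_comm]
  refine Finset.sum_congr rfl fun i _ => ?_
  rw [Finset.sum_comm]
  refine Finset.sum_congr rfl fun l _ => ?_
  rw [Finset.sum_comm]
  exact Finset.sum_congr rfl fun r _ => gc_ite_count _ _

lemma gc_expand2 (f : Fin N → Fin N → ℝ) (j k : Fin N) :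
    (∑ π : Equiv.Perm (Fin N), f (π j) (π k))
      = ∑ i, ∑ l, ((Finset.univ.filter fun π : Equiv.Perm (Fin N) =>
          π k = l ∧ π j = i).card : ℝ) * f i l := by
  classical
  have hcol : ∀ π : Equiv.Perm (Fin N),
      f (π j) (π k) = ∑ i, ∑ l,
        if π k = l ∧ π j = i then f i l else 0 := by
    intro π
    simp [ite_and, Finset.sum_ite_eq]
  simp_rw [hcol]
  rw [Finset.sum_comm]
  refine Finset.sum_congr rfl fun i _ => ?_
  rw [Finset.sum_comm]
  exact Finset.sum_congr rfl fun l _ => gc_ite_count _ _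

lemma gc_expand1 (f : Fin N → ℝ) (j : Fin N) :
    (∑ π : Equiv.Perm (Fin N), f (π j))
      = ∑ i, ((Finset.univ.filter fun π : Equiv.Perm (Fin N) => π j = i).card : ℝ) * f i := by
  classical
  have hcol : ∀ π : Equiv.Perm (Fin N),
      f (π j) = ∑ i, if π j = i then f i else 0 := by
    intro π
    simp [Finset.sum_ite_eq]
  simp_rw [hcol]
  rw [Finset.sum_comm]
  exact Finset.sum_congr rfl fun i _ => gc_ite_count _ _

/-! ### Helper lemmas for indicator sums -/

lemma gc_ite_mul_zero (P : Prop) [Decidable P] (x C : ℝ) :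
    (if P then x * C else 0) = (if P then x else 0) * C := by
  split_ifs <;> simp

lemma gc_sum_ite_pull {α : Type*} [Fintype α] (P : Prop) [Decidable P] (f : α → ℝ) :
    (∑ u : α, if P then f u else 0) = if P then ∑ u : α, f u else 0 := by
  split_ifs <;> simp

lemma gc_colA {α : Type*} [Fintype α] [DecidableEq α] (w : α) (P : Prop) [Decidable P]
    (g : α → ℝ) :
    (∑ x : α, if w = x ∧ P then g x else 0) = if P then g w else 0 := by
  simp [ite_and, Finset.sum_ite_eq]

lemma gc_colA0 {α : Type*} [Fintype α] [DecidableEq α] (w : α) (g : α → ℝ) :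
    (∑ x : α, if w = x then g x else 0) = g w := by
  simp [Finset.sum_ite_eq]

lemma gc_colB {α : Type*} [Fintype α] [DecidableEq α] (w : α) (D : α → Prop)
    [DecidablePred D] (g : α → α → ℝ) :
    (∑ s : α, ∑ u : α, if w = s ∧ D u then g s u else 0)
      = ∑ u : α, if D u then g w u else 0 := by
  simp_rw [ite_and, gc_sum_ite_pull, Finset.sum_ite_eq, Finset.mem_univ, if_true]

lemma gc_colC {α : Type*} [Fintype α] [DecidableEq α] (w : α) (D : α → α → Prop)
    [∀ x y, Decidable (D x y)] (g : α → α → α → ℝ) :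
    (∑ k : α, ∑ s : α, ∑ u : α, if w = k ∧ D s u then g k s u else 0)
      = ∑ s : α, ∑ u : α, if D s u then g w s u else 0 := by
  simp_rw [ite_and, gc_sum_ite_pull, Finset.sum_ite_eq, Finset.mem_univ, if_true]
/-! ### Values of the inner permutation sums, per coincidence pattern -/

variable (c : Fin N → Fin N → ℝ)

lemma gc_T0 (j k s u : Fin N) (h1 : j ≠ k) (h2 : j ≠ s) (h3 : j ≠ u) (h4 : k ≠ s)
    (h5 : k ≠ u) (h6 : s ≠ u) :
    (∑ π : Equiv.Perm (Fin N), c (π j) (π k) * c (π s) (π u))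
      = ((N - 4).factorial : ℝ) * ∑ i, ∑ l, ∑ r, ∑ t,
          if i ≠ l ∧ i ≠ r ∧ i ≠ t ∧ l ≠ r ∧ l ≠ t ∧ r ≠ t then c i l * c r t else 0 := by
  rw [gc_expand4 (fun i l r t => c i l * c r t) j k s u]
  simp_rw [gc_card4 j k s u _ _ _ _ h1 h2 h3 h4 h5 h6, ite_mul, zero_mul, Finset.mul_sum,
    mul_ite, mul_zero]

lemma gc_T1 (j k u : Fin N) (h1 : j ≠ k) (h2 : j ≠ u) (h3 : k ≠ u) :
    (∑ π : Equiv.Perm (Fin N), c (π j) (π k) * c (π j) (π u))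
      = ((N - 3).factorial : ℝ) * ∑ i, ∑ l, ∑ t,
          if i ≠ l ∧ i ≠ t ∧ l ≠ t then c i l * c i t else 0 := by
  rw [gc_expand3 (fun i l t => c i l * c i t) j k u]
  simp_rw [gc_card3 j k u _ _ _ h1 h2 h3, ite_mul, zero_mul, Finset.mul_sum, mul_ite, mul_zero]

lemma gc_T2 (j k s : Fin N) (h1 : j ≠ k) (h2 : j ≠ s) (h3 : k ≠ s) :
    (∑ π : Equiv.Perm (Fin N), c (π j) (π k) * c (π s) (π j))
      = ((N - 3).factorial : ℝ) * ∑ i, ∑ l, ∑ r,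
          if i ≠ l ∧ i ≠ r ∧ l ≠ r then c i l * c r i else 0 := by
  rw [gc_expand3 (fun i l r => c i l * c r i) j k s]
  simp_rw [gc_card3 j k s _ _ _ h1 h2 h3, ite_mul, zero_mul, Finset.mul_sum, mul_ite, mul_zero]

lemma gc_T3 (j k u : Fin N) (h1 : j ≠ k) (h2 : j ≠ u) (h3 : k ≠ u) :
    (∑ π : Equiv.Perm (Fin N), c (π j) (π k) * c (π k) (π u))
      = ((N - 3).factorial : ℝ) * ∑ i, ∑ l, ∑ t,
          if i ≠ l ∧ i ≠ t ∧ l ≠ t then c i l * c l t else 0 := by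
  rw [gc_expand3 (fun i l t => c i l * c l t) j k u]
  simp_rw [gc_card3 j k u _ _ _ h1 h2 h3, ite_mul, zero_mul, Finset.mul_sum, mul_ite, mul_zero]

lemma gc_T4 (j k s : Fin N) (h1 : j ≠ k) (h2 : j ≠ s) (h3 : k ≠ s) :
    (∑ π : Equiv.Perm (Fin N), c (π j) (π k) * c (π s) (π k))
      = ((N - 3).factorial : ℝ) * ∑ i, ∑ l, ∑ r,
          if i ≠ l ∧ i ≠ r ∧ l ≠ r then c i l * c r l else 0 := by
  rw [gc_expand3 (fun i l r => c i l * c r l) j k s]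
  simp_rw [gc_card3 j k s _ _ _ h1 h2 h3, ite_mul, zero_mul, Finset.mul_sum, mul_ite, mul_zero]

lemma gc_T5 (j s u : Fin N) (h1 : j ≠ s) (h2 : j ≠ u) (h3 : s ≠ u) :
    (∑ π : Equiv.Perm (Fin N), c (π j) (π j) * c (π s) (π u))
      = ((N - 3).factorial : ℝ) * ∑ i, ∑ r, ∑ t,
          if i ≠ r ∧ i ≠ t ∧ r ≠ t then c i i * c r t else 0 := by
  rw [gc_expand3 (fun i r t => c i i * c r t) j s u]
  simp_rw [gc_card3 j s u _ _ _ h1 h2 h3, ite_mul, zero_mul, Finset.mul_sum, mul_ite, mul_zero]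

lemma gc_T6 (j k s : Fin N) (h1 : j ≠ k) (h2 : j ≠ s) (h3 : k ≠ s) :
    (∑ π : Equiv.Perm (Fin N), c (π j) (π k) * c (π s) (π s))
      = ((N - 3).factorial : ℝ) * ∑ i, ∑ l, ∑ r,
          if i ≠ l ∧ i ≠ r ∧ l ≠ r then c i l * c r r else 0 := by
  rw [gc_expand3 (fun i l r => c i l * c r r) j k s]
  simp_rw [gc_card3 j k s _ _ _ h1 h2 h3, ite_mul, zero_mul, Finset.mul_sum, mul_ite, mul_zero]

lemma gc_T7 (j k : Fin N) (h1 : j ≠ k) :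
    (∑ π : Equiv.Perm (Fin N), c (π j) (π k) * c (π j) (π k))
      = ((N - 2).factorial : ℝ) * ∑ i, ∑ l, if i ≠ l then c i l * c i l else 0 := by
  rw [gc_expand2 (fun i l => c i l * c i l) j k]
  simp_rw [gc_card2 j k _ _ h1, ite_mul, zero_mul, Finset.mul_sum, mul_ite, mul_zero]

lemma gc_T8 (j k : Fin N) (h1 : j ≠ k) :
    (∑ π : Equiv.Perm (Fin N), c (π j) (π k) * c (π k) (π j))
      = ((N - 2).factorial : ℝ) * ∑ i, ∑ l, if i ≠ l then c i l * c l i else 0 := by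
  rw [gc_expand2 (fun i l => c i l * c l i) j k]
  simp_rw [gc_card2 j k _ _ h1, ite_mul, zero_mul, Finset.mul_sum, mul_ite, mul_zero]

lemma gc_T9 (j s : Fin N) (h1 : j ≠ s) :
    (∑ π : Equiv.Perm (Fin N), c (π j) (π j) * c (π s) (π s))
      = ((N - 2).factorial : ℝ) * ∑ i, ∑ r, if i ≠ r then c i i * c r r else 0 := by
  rw [gc_expand2 (fun i r => c i i * c r r) j s]
  simp_rw [gc_card2 j s _ _ h1, ite_mul, zero_mul, Finset.mul_sum, mul_ite, mul_zero]

lemma gc_T10 (j u : Fin N) (h1 : j ≠ u) :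
    (∑ π : Equiv.Perm (Fin N), c (π j) (π j) * c (π j) (π u))
      = ((N - 2).factorial : ℝ) * ∑ i, ∑ t, if i ≠ t then c i i * c i t else 0 := by
  rw [gc_expand2 (fun i t => c i i * c i t) j u]
  simp_rw [gc_card2 j u _ _ h1, ite_mul, zero_mul, Finset.mul_sum, mul_ite, mul_zero]

lemma gc_T11 (j s : Fin N) (h1 : j ≠ s) :
    (∑ π : Equiv.Perm (Fin N), c (π j) (π j) * c (π s) (π j))
      = ((N - 2).factorial : ℝ) * ∑ i, ∑ r, if i ≠ r then c i i * c r i else 0 := by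
  rw [gc_expand2 (fun i r => c i i * c r i) j s]
  simp_rw [gc_card2 j s _ _ h1, ite_mul, zero_mul, Finset.mul_sum, mul_ite, mul_zero]

lemma gc_T12 (j k : Fin N) (h1 : j ≠ k) :
    (∑ π : Equiv.Perm (Fin N), c (π j) (π k) * c (π j) (π j))
      = ((N - 2).factorial : ℝ) * ∑ i, ∑ l, if i ≠ l then c i l * c i i else 0 := by
  rw [gc_expand2 (fun i l => c i l * c i i) j k]
  simp_rw [gc_card2 j k _ _ h1, ite_mul, zero_mul, Finset.mul_sum, mul_ite, mul_zero]

lemma gc_T13 (j k : Fin N) (h1 : j ≠ k) :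
    (∑ π : Equiv.Perm (Fin N), c (π j) (π k) * c (π k) (π k))
      = ((N - 2).factorial : ℝ) * ∑ i, ∑ l, if i ≠ l then c i l * c l l else 0 := by
  rw [gc_expand2 (fun i l => c i l * c l l) j k]
  simp_rw [gc_card2 j k _ _ h1, ite_mul, zero_mul, Finset.mul_sum, mul_ite, mul_zero]

lemma gc_T14 (j : Fin N) :
    (∑ π : Equiv.Perm (Fin N), c (π j) (π j) * c (π j) (π j))
      = ((N - 1).factorial : ℝ) * ∑ i, c i i * c i i := by
  rw [gc_expand1 (fun i => c i i * c i i) j]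
  simp_rw [gc_card1 j, Finset.mul_sum]
/-! ### Merging symmetric variants of the primed sums -/

variable {c}

lemma gc_m2 (hs : ∀ i j, c i j = c j i) :
    (∑ x, ∑ y, ∑ z, if x ≠ y ∧ x ≠ z ∧ y ≠ z then c x y * c z x else 0)
      = ∑ x, ∑ y, ∑ z, if x ≠ y ∧ x ≠ z ∧ y ≠ z then c x y * c x z else 0 := by
  refine Finset.sum_congr rfl fun x _ => Finset.sum_congr rfl fun y _ =>
    Finset.sum_congr rfl fun z _ => ?_
  rw [hs z x]

lemma gc_m3 (hs : ∀ i j, c i j = c j i) :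
    (∑ x, ∑ y, ∑ z, if x ≠ y ∧ x ≠ z ∧ y ≠ z then c x y * c y z else 0)
      = ∑ x, ∑ y, ∑ z, if x ≠ y ∧ x ≠ z ∧ y ≠ z then c x y * c x z else 0 := by
  have h1 : (∑ x, ∑ y, ∑ z, if x ≠ y ∧ x ≠ z ∧ y ≠ z then c x y * c y z else 0)
      = ∑ x, ∑ y, ∑ z, if x ≠ y ∧ x ≠ z ∧ y ≠ z then c y x * c y z else 0 := by
    refine Finset.sum_congr rfl fun x _ => Finset.sum_congr rfl fun y _ =>
      Finset.sum_congr rfl fun z _ => ?_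
    rw [hs x y]
  rw [h1, Finset.sum_comm]
  refine Finset.sum_congr rfl fun y _ => Finset.sum_congr rfl fun x _ =>
    Finset.sum_congr rfl fun z _ => ?_
  exact if_congr ⟨fun h => ⟨h.1.symm, h.2.2, h.2.1⟩, fun h => ⟨h.1.symm, h.2.2, h.2.1⟩⟩ rfl rfl

lemma gc_m4 (hs : ∀ i j, c i j = c j i) :
    (∑ x, ∑ y, ∑ z, if x ≠ y ∧ x ≠ z ∧ y ≠ z then c x y * c z y else 0)
      = ∑ x, ∑ y, ∑ z, if x ≠ y ∧ x ≠ z ∧ y ≠ z then c x y * c x z else 0 := by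
  have h1 : (∑ x, ∑ y, ∑ z, if x ≠ y ∧ x ≠ z ∧ y ≠ z then c x y * c z y else 0)
      = ∑ x, ∑ y, ∑ z, if x ≠ y ∧ x ≠ z ∧ y ≠ z then c y x * c y z else 0 := by
    refine Finset.sum_congr rfl fun x _ => Finset.sum_congr rfl fun y _ =>
      Finset.sum_congr rfl fun z _ => ?_
    rw [hs x y, hs z y]
  rw [h1, Finset.sum_comm]
  refine Finset.sum_congr rfl fun y _ => Finset.sum_congr rfl fun x _ =>
    Finset.sum_congr rfl fun z _ => ?_
  exact if_congr ⟨fun h => ⟨h.1.symm, h.2.2, h.2.1⟩, fun h => ⟨h.1.symm, h.2.2, h.2.1⟩⟩ rfl rfl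

lemma gc_m6 :
    (∑ x, ∑ y, ∑ z, if x ≠ y ∧ x ≠ z ∧ y ≠ z then c x y * c z z else 0)
      = ∑ x, ∑ y, ∑ z, if x ≠ y ∧ x ≠ z ∧ y ≠ z then c x x * c y z else 0 := by
  have h1 : (∑ x, ∑ y, ∑ z, if x ≠ y ∧ x ≠ z ∧ y ≠ z then c x y * c z z else 0)
      = ∑ x, ∑ z, ∑ y, if x ≠ y ∧ x ≠ z ∧ y ≠ z then c z z * c x y else 0 := by
    refine Finset.sum_congr rfl fun x _ => ?_
    rw [Finset.sum_comm]
    refine Finset.sum_congr rfl fun z _ => Finset.sum_congr rfl fun y _ => ?_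
    exact if_congr Iff.rfl (mul_comm _ _) rfl
  rw [h1, Finset.sum_comm]
  refine Finset.sum_congr rfl fun z _ => Finset.sum_congr rfl fun x _ =>
    Finset.sum_congr rfl fun y _ => ?_
  exact if_congr ⟨fun h => ⟨h.2.1.symm, h.2.2.symm, h.1⟩,
    fun h => ⟨h.2.2, h.1.symm, h.2.1.symm⟩⟩ rfl rfl

lemma gc_m7 :
    (∑ x, ∑ y, if x ≠ y then c x y * c x y else 0)
      = ∑ x, ∑ y, if x ≠ y then (c x y) ^ 2 else 0 := by
  refine Finset.sum_congr rfl fun x _ => Finset.sum_congr rfl fun y _ => ?_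
  rw [← pow_two]

lemma gc_m8 (hs : ∀ i j, c i j = c j i) :
    (∑ x, ∑ y, if x ≠ y then c x y * c y x else 0)
      = ∑ x, ∑ y, if x ≠ y then (c x y) ^ 2 else 0 := by
  refine Finset.sum_congr rfl fun x _ => Finset.sum_congr rfl fun y _ => ?_
  rw [hs y x, ← pow_two]

lemma gc_m11 (hs : ∀ i j, c i j = c j i) :
    (∑ x, ∑ y, if x ≠ y then c x x * c y x else 0)
      = ∑ x, ∑ y, if x ≠ y then c x x * c x y else 0 := by
  refine Finset.sum_congr rfl fun x _ => Finset.sum_congr rfl fun y _ => ?_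
  rw [hs y x]

lemma gc_m12 :
    (∑ x, ∑ y, if x ≠ y then c x y * c x x else 0)
      = ∑ x, ∑ y, if x ≠ y then c x x * c x y else 0 := by
  refine Finset.sum_congr rfl fun x _ => Finset.sum_congr rfl fun y _ => ?_
  exact if_congr Iff.rfl (mul_comm _ _) rfl

lemma gc_m13 (hs : ∀ i j, c i j = c j i) :
    (∑ x, ∑ y, if x ≠ y then c x y * c y y else 0)
      = ∑ x, ∑ y, if x ≠ y then c x x * c x y else 0 := by
  have h1 : (∑ x, ∑ y, if x ≠ y then c x y * c y y else 0)
      = ∑ x, ∑ y, if x ≠ y then c y y * c y x else 0 := by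
    refine Finset.sum_congr rfl fun x _ => Finset.sum_congr rfl fun y _ => ?_
    rw [hs x y, mul_comm]
  rw [h1, Finset.sum_comm]
  refine Finset.sum_congr rfl fun y _ => Finset.sum_congr rfl fun x _ => ?_
  exact if_congr ne_comm rfl rfl

lemma gc_m14 :
    (∑ x, c x x * c x x) = ∑ x, (c x x) ^ 2 := by
  refine Finset.sum_congr rfl fun x _ => ?_
  rw [← pow_two]
/-! ### Splitting a quadruple sum into the 15 coincidence patterns -/

set_option maxHeartbeats 1000000 in
lemma gc_class_split (j k s u : Fin N) (F : ℝ) :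
    F = (if j ≠ k ∧ j ≠ s ∧ j ≠ u ∧ k ≠ s ∧ k ≠ u ∧ s ≠ u then F else 0)
      + (if j = s ∧ j ≠ k ∧ j ≠ u ∧ k ≠ u then F else 0)
      + (if j = u ∧ j ≠ k ∧ j ≠ s ∧ k ≠ s then F else 0)
      + (if k = s ∧ j ≠ k ∧ j ≠ u ∧ k ≠ u then F else 0)
      + (if k = u ∧ j ≠ k ∧ j ≠ s ∧ k ≠ s then F else 0)
      + (if j = k ∧ j ≠ s ∧ j ≠ u ∧ s ≠ u then F else 0)
      + (if s = u ∧ j ≠ k ∧ j ≠ s ∧ k ≠ s then F else 0)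
      + (if k = u ∧ j = s ∧ j ≠ k then F else 0)
      + (if j = u ∧ k = s ∧ j ≠ k then F else 0)
      + (if s = u ∧ j = k ∧ j ≠ s then F else 0)
      + (if j = s ∧ j = k ∧ j ≠ u then F else 0)
      + (if j = u ∧ j = k ∧ j ≠ s then F else 0)
      + (if j = u ∧ j = s ∧ j ≠ k then F else 0)
      + (if k = u ∧ k = s ∧ j ≠ k then F else 0)
      + (if j = u ∧ j = s ∧ j = k then F else 0) := by
  rcases eq_or_ne j k with h1 | h1 <;> rcases eq_or_ne j s with h2 | h2 <;>
    rcases eq_or_ne j u with h3 | h3 <;> rcases eq_or_ne k s with h4 | h4 <;>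
    rcases eq_or_ne k u with h5 | h5 <;> rcases eq_or_ne s u with h6 | h6 <;>
    simp_all

/-! ### The fifteen class sums -/

variable (a b : Fin N → Fin N → ℝ)

lemma gc_class0 :
    (∑ j, ∑ k, ∑ s, ∑ u, if j ≠ k ∧ j ≠ s ∧ j ≠ u ∧ k ≠ s ∧ k ≠ u ∧ s ≠ u
        then (a j k * a s u) * (∑ π : Equiv.Perm (Fin N), b (π j) (π k) * b (π s) (π u)) else 0)
      = (∑ j, ∑ k, ∑ s, ∑ u, if j ≠ k ∧ j ≠ s ∧ j ≠ u ∧ k ≠ s ∧ k ≠ u ∧ s ≠ u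
            then a j k * a s u else 0)
        * (((N - 4).factorial : ℝ) * ∑ i, ∑ l, ∑ r, ∑ t,
            if i ≠ l ∧ i ≠ r ∧ i ≠ t ∧ l ≠ r ∧ l ≠ t ∧ r ≠ t then b i l * b r t else 0) := by
  classical
  have step1 : ∀ j k s u : Fin N, (if j ≠ k ∧ j ≠ s ∧ j ≠ u ∧ k ≠ s ∧ k ≠ u ∧ s ≠ u
        then (a j k * a s u) * (∑ π : Equiv.Perm (Fin N), b (π j) (π k) * b (π s) (π u)) else 0)
      = if j ≠ k ∧ j ≠ s ∧ j ≠ u ∧ k ≠ s ∧ k ≠ u ∧ s ≠ u then (a j k * a s u)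
          * (((N - 4).factorial : ℝ) * ∑ i, ∑ l, ∑ r, ∑ t,
            if i ≠ l ∧ i ≠ r ∧ i ≠ t ∧ l ≠ r ∧ l ≠ t ∧ r ≠ t then b i l * b r t else 0) else 0 := by
    intro j k s u
    by_cases h : j ≠ k ∧ j ≠ s ∧ j ≠ u ∧ k ≠ s ∧ k ≠ u ∧ s ≠ u
    · obtain ⟨h1, h2, h3, h4, h5, h6⟩ := h
      rw [if_pos ⟨h1, h2, h3, h4, h5, h6⟩, if_pos ⟨h1, h2, h3, h4, h5, h6⟩,
        gc_T0 b j k s u h1 h2 h3 h4 h5 h6]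
    · rw [if_neg h, if_neg h]
  simp_rw [step1, gc_ite_mul_zero, ← Finset.sum_mul]

lemma gc_class1 :
    (∑ j, ∑ k, ∑ s, ∑ u, if j = s ∧ j ≠ k ∧ j ≠ u ∧ k ≠ u
        then (a j k * a s u) * (∑ π : Equiv.Perm (Fin N), b (π j) (π k) * b (π s) (π u)) else 0)
      = (∑ j, ∑ k, ∑ u, if j ≠ k ∧ j ≠ u ∧ k ≠ u then a j k * a j u else 0)
        * (((N - 3).factorial : ℝ)
            * ∑ i, ∑ l, ∑ t, if i ≠ l ∧ i ≠ t ∧ l ≠ t then b i l * b i t else 0) := by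
  classical
  have step1 : ∀ j k s u : Fin N, (if j = s ∧ j ≠ k ∧ j ≠ u ∧ k ≠ u
        then (a j k * a s u) * (∑ π : Equiv.Perm (Fin N), b (π j) (π k) * b (π s) (π u)) else 0)
      = if j = s ∧ j ≠ k ∧ j ≠ u ∧ k ≠ u then (a j k * a s u) * (((N - 3).factorial : ℝ)
            * ∑ i, ∑ l, ∑ t, if i ≠ l ∧ i ≠ t ∧ l ≠ t then b i l * b i t else 0) else 0 := by
    intro j k s u
    by_cases h : j = s ∧ j ≠ k ∧ j ≠ u ∧ k ≠ u
    · obtain ⟨rfl, h1, h2, h3⟩ := h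
      rw [if_pos ⟨rfl, h1, h2, h3⟩, if_pos ⟨rfl, h1, h2, h3⟩, gc_T1 b j k u h1 h2 h3]
    · rw [if_neg h, if_neg h]
  simp_rw [step1]
  have step2 := fun (j k : Fin N) => gc_colB j (fun u => j ≠ k ∧ j ≠ u ∧ k ≠ u)
    (fun s u => (a j k * a s u) * (((N - 3).factorial : ℝ)
      * ∑ i, ∑ l, ∑ t, if i ≠ l ∧ i ≠ t ∧ l ≠ t then b i l * b i t else 0))
  simp_rw [step2, gc_ite_mul_zero, ← Finset.sum_mul]

lemma gc_class2 :
    (∑ j, ∑ k, ∑ s, ∑ u, if j = u ∧ j ≠ k ∧ j ≠ s ∧ k ≠ s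
        then (a j k * a s u) * (∑ π : Equiv.Perm (Fin N), b (π j) (π k) * b (π s) (π u)) else 0)
      = (∑ j, ∑ k, ∑ s, if j ≠ k ∧ j ≠ s ∧ k ≠ s then a j k * a s j else 0)
        * (((N - 3).factorial : ℝ)
            * ∑ i, ∑ l, ∑ r, if i ≠ l ∧ i ≠ r ∧ l ≠ r then b i l * b r i else 0) := by
  classical
  have step1 : ∀ j k s u : Fin N, (if j = u ∧ j ≠ k ∧ j ≠ s ∧ k ≠ s
        then (a j k * a s u) * (∑ π : Equiv.Perm (Fin N), b (π j) (π k) * b (π s) (π u)) else 0)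
      = if j = u ∧ j ≠ k ∧ j ≠ s ∧ k ≠ s then (a j k * a s u) * (((N - 3).factorial : ℝ)
            * ∑ i, ∑ l, ∑ r, if i ≠ l ∧ i ≠ r ∧ l ≠ r then b i l * b r i else 0) else 0 := by
    intro j k s u
    by_cases h : j = u ∧ j ≠ k ∧ j ≠ s ∧ k ≠ s
    · obtain ⟨rfl, h1, h2, h3⟩ := h
      rw [if_pos ⟨rfl, h1, h2, h3⟩, if_pos ⟨rfl, h1, h2, h3⟩, gc_T2 b j k s h1 h2 h3]
    · rw [if_neg h, if_neg h]
  simp_rw [step1]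
  have step2 := fun (j k s : Fin N) => gc_colA j (j ≠ k ∧ j ≠ s ∧ k ≠ s)
    (fun u => (a j k * a s u) * (((N - 3).factorial : ℝ)
      * ∑ i, ∑ l, ∑ r, if i ≠ l ∧ i ≠ r ∧ l ≠ r then b i l * b r i else 0))
  simp_rw [step2, gc_ite_mul_zero, ← Finset.sum_mul]

lemma gc_class3 :
    (∑ j, ∑ k, ∑ s, ∑ u, if k = s ∧ j ≠ k ∧ j ≠ u ∧ k ≠ u
        then (a j k * a s u) * (∑ π : Equiv.Perm (Fin N), b (π j) (π k) * b (π s) (π u)) else 0)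
      = (∑ j, ∑ k, ∑ u, if j ≠ k ∧ j ≠ u ∧ k ≠ u then a j k * a k u else 0)
        * (((N - 3).factorial : ℝ)
            * ∑ i, ∑ l, ∑ t, if i ≠ l ∧ i ≠ t ∧ l ≠ t then b i l * b l t else 0) := by
  classical
  have step1 : ∀ j k s u : Fin N, (if k = s ∧ j ≠ k ∧ j ≠ u ∧ k ≠ u
        then (a j k * a s u) * (∑ π : Equiv.Perm (Fin N), b (π j) (π k) * b (π s) (π u)) else 0)
      = if k = s ∧ j ≠ k ∧ j ≠ u ∧ k ≠ u then (a j k * a s u) * (((N - 3).factorial : ℝ)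
            * ∑ i, ∑ l, ∑ t, if i ≠ l ∧ i ≠ t ∧ l ≠ t then b i l * b l t else 0) else 0 := by
    intro j k s u
    by_cases h : k = s ∧ j ≠ k ∧ j ≠ u ∧ k ≠ u
    · obtain ⟨rfl, h1, h2, h3⟩ := h
      rw [if_pos ⟨rfl, h1, h2, h3⟩, if_pos ⟨rfl, h1, h2, h3⟩, gc_T3 b j k u h1 h2 h3]
    · rw [if_neg h, if_neg h]
  simp_rw [step1]
  have step2 := fun (j k : Fin N) => gc_colB k (fun u => j ≠ k ∧ j ≠ u ∧ k ≠ u)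
    (fun s u => (a j k * a s u) * (((N - 3).factorial : ℝ)
      * ∑ i, ∑ l, ∑ t, if i ≠ l ∧ i ≠ t ∧ l ≠ t then b i l * b l t else 0))
  simp_rw [step2, gc_ite_mul_zero, ← Finset.sum_mul]

lemma gc_class4 :
    (∑ j, ∑ k, ∑ s, ∑ u, if k = u ∧ j ≠ k ∧ j ≠ s ∧ k ≠ s
        then (a j k * a s u) * (∑ π : Equiv.Perm (Fin N), b (π j) (π k) * b (π s) (π u)) else 0)
      = (∑ j, ∑ k, ∑ s, if j ≠ k ∧ j ≠ s ∧ k ≠ s then a j k * a s k else 0)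
        * (((N - 3).factorial : ℝ)
            * ∑ i, ∑ l, ∑ r, if i ≠ l ∧ i ≠ r ∧ l ≠ r then b i l * b r l else 0) := by
  classical
  have step1 : ∀ j k s u : Fin N, (if k = u ∧ j ≠ k ∧ j ≠ s ∧ k ≠ s
        then (a j k * a s u) * (∑ π : Equiv.Perm (Fin N), b (π j) (π k) * b (π s) (π u)) else 0)
      = if k = u ∧ j ≠ k ∧ j ≠ s ∧ k ≠ s then (a j k * a s u) * (((N - 3).factorial : ℝ)
            * ∑ i, ∑ l, ∑ r, if i ≠ l ∧ i ≠ r ∧ l ≠ r then b i l * b r l else 0) else 0 := by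
    intro j k s u
    by_cases h : k = u ∧ j ≠ k ∧ j ≠ s ∧ k ≠ s
    · obtain ⟨rfl, h1, h2, h3⟩ := h
      rw [if_pos ⟨rfl, h1, h2, h3⟩, if_pos ⟨rfl, h1, h2, h3⟩, gc_T4 b j k s h1 h2 h3]
    · rw [if_neg h, if_neg h]
  simp_rw [step1]
  have step2 := fun (j k s : Fin N) => gc_colA k (j ≠ k ∧ j ≠ s ∧ k ≠ s)
    (fun u => (a j k * a s u) * (((N - 3).factorial : ℝ)
      * ∑ i, ∑ l, ∑ r, if i ≠ l ∧ i ≠ r ∧ l ≠ r then b i l * b r l else 0))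
  simp_rw [step2, gc_ite_mul_zero, ← Finset.sum_mul]

lemma gc_class5 :
    (∑ j, ∑ k, ∑ s, ∑ u, if j = k ∧ j ≠ s ∧ j ≠ u ∧ s ≠ u
        then (a j k * a s u) * (∑ π : Equiv.Perm (Fin N), b (π j) (π k) * b (π s) (π u)) else 0)
      = (∑ j, ∑ s, ∑ u, if j ≠ s ∧ j ≠ u ∧ s ≠ u then a j j * a s u else 0)
        * (((N - 3).factorial : ℝ)
            * ∑ i, ∑ r, ∑ t, if i ≠ r ∧ i ≠ t ∧ r ≠ t then b i i * b r t else 0) := by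
  classical
  have step1 : ∀ j k s u : Fin N, (if j = k ∧ j ≠ s ∧ j ≠ u ∧ s ≠ u
        then (a j k * a s u) * (∑ π : Equiv.Perm (Fin N), b (π j) (π k) * b (π s) (π u)) else 0)
      = if j = k ∧ j ≠ s ∧ j ≠ u ∧ s ≠ u then (a j k * a s u) * (((N - 3).factorial : ℝ)
            * ∑ i, ∑ r, ∑ t, if i ≠ r ∧ i ≠ t ∧ r ≠ t then b i i * b r t else 0) else 0 := by
    intro j k s u
    by_cases h : j = k ∧ j ≠ s ∧ j ≠ u ∧ s ≠ u
    · obtain ⟨rfl, h1, h2, h3⟩ := h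
      rw [if_pos ⟨rfl, h1, h2, h3⟩, if_pos ⟨rfl, h1, h2, h3⟩, gc_T5 b j s u h1 h2 h3]
    · rw [if_neg h, if_neg h]
  simp_rw [step1]
  have step2 := fun (j : Fin N) => gc_colC j (fun s u => j ≠ s ∧ j ≠ u ∧ s ≠ u)
    (fun k s u => (a j k * a s u) * (((N - 3).factorial : ℝ)
      * ∑ i, ∑ r, ∑ t, if i ≠ r ∧ i ≠ t ∧ r ≠ t then b i i * b r t else 0))
  simp_rw [step2, gc_ite_mul_zero, ← Finset.sum_mul]

lemma gc_class6 :
    (∑ j, ∑ k, ∑ s, ∑ u, if s = u ∧ j ≠ k ∧ j ≠ s ∧ k ≠ s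
        then (a j k * a s u) * (∑ π : Equiv.Perm (Fin N), b (π j) (π k) * b (π s) (π u)) else 0)
      = (∑ j, ∑ k, ∑ s, if j ≠ k ∧ j ≠ s ∧ k ≠ s then a j k * a s s else 0)
        * (((N - 3).factorial : ℝ)
            * ∑ i, ∑ l, ∑ r, if i ≠ l ∧ i ≠ r ∧ l ≠ r then b i l * b r r else 0) := by
  classical
  have step1 : ∀ j k s u : Fin N, (if s = u ∧ j ≠ k ∧ j ≠ s ∧ k ≠ s
        then (a j k * a s u) * (∑ π : Equiv.Perm (Fin N), b (π j) (π k) * b (π s) (π u)) else 0)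
      = if s = u ∧ j ≠ k ∧ j ≠ s ∧ k ≠ s then (a j k * a s u) * (((N - 3).factorial : ℝ)
            * ∑ i, ∑ l, ∑ r, if i ≠ l ∧ i ≠ r ∧ l ≠ r then b i l * b r r else 0) else 0 := by
    intro j k s u
    by_cases h : s = u ∧ j ≠ k ∧ j ≠ s ∧ k ≠ s
    · obtain ⟨rfl, h1, h2, h3⟩ := h
      rw [if_pos ⟨rfl, h1, h2, h3⟩, if_pos ⟨rfl, h1, h2, h3⟩, gc_T6 b j k s h1 h2 h3]
    · rw [if_neg h, if_neg h]
  simp_rw [step1]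
  have step2 := fun (j k s : Fin N) => gc_colA s (j ≠ k ∧ j ≠ s ∧ k ≠ s)
    (fun u => (a j k * a s u) * (((N - 3).factorial : ℝ)
      * ∑ i, ∑ l, ∑ r, if i ≠ l ∧ i ≠ r ∧ l ≠ r then b i l * b r r else 0))
  simp_rw [step2, gc_ite_mul_zero, ← Finset.sum_mul]
lemma gc_class7 :
    (∑ j, ∑ k, ∑ s, ∑ u, if k = u ∧ j = s ∧ j ≠ k
        then (a j k * a s u) * (∑ π : Equiv.Perm (Fin N), b (π j) (π k) * b (π s) (π u)) else 0)
      = (∑ j, ∑ k, if j ≠ k then a j k * a j k else 0)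
        * (((N - 2).factorial : ℝ)
            * ∑ i, ∑ l, if i ≠ l then b i l * b i l else 0) := by
  classical
  have step1 : ∀ j k s u : Fin N, (if k = u ∧ j = s ∧ j ≠ k
        then (a j k * a s u) * (∑ π : Equiv.Perm (Fin N), b (π j) (π k) * b (π s) (π u)) else 0)
      = if k = u ∧ j = s ∧ j ≠ k then (a j k * a s u) * (((N - 2).factorial : ℝ)
            * ∑ i, ∑ l, if i ≠ l then b i l * b i l else 0) else 0 := by
    intro j k s u
    by_cases h : k = u ∧ j = s ∧ j ≠ k
    · obtain ⟨rfl, rfl, h1⟩ := h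
      rw [if_pos ⟨rfl, rfl, h1⟩, if_pos ⟨rfl, rfl, h1⟩, gc_T7 b j k h1]
    · rw [if_neg h, if_neg h]
  simp_rw [step1]
  have step2 := fun (j k s : Fin N) => gc_colA k (j = s ∧ j ≠ k)
    (fun u => (a j k * a s u) * (((N - 2).factorial : ℝ)
      * ∑ i, ∑ l, if i ≠ l then b i l * b i l else 0))
  simp_rw [step2]
  have step3 := fun (j k : Fin N) => gc_colA j (j ≠ k)
    (fun s => (a j k * a s k) * (((N - 2).factorial : ℝ)
      * ∑ i, ∑ l, if i ≠ l then b i l * b i l else 0))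
  simp_rw [step3, gc_ite_mul_zero, ← Finset.sum_mul]

lemma gc_class8 :
    (∑ j, ∑ k, ∑ s, ∑ u, if j = u ∧ k = s ∧ j ≠ k
        then (a j k * a s u) * (∑ π : Equiv.Perm (Fin N), b (π j) (π k) * b (π s) (π u)) else 0)
      = (∑ j, ∑ k, if j ≠ k then a j k * a k j else 0)
        * (((N - 2).factorial : ℝ)
            * ∑ i, ∑ l, if i ≠ l then b i l * b l i else 0) := by
  classical
  have step1 : ∀ j k s u : Fin N, (if j = u ∧ k = s ∧ j ≠ k
        then (a j k * a s u) * (∑ π : Equiv.Perm (Fin N), b (π j) (π k) * b (π s) (π u)) else 0)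
      = if j = u ∧ k = s ∧ j ≠ k then (a j k * a s u) * (((N - 2).factorial : ℝ)
            * ∑ i, ∑ l, if i ≠ l then b i l * b l i else 0) else 0 := by
    intro j k s u
    by_cases h : j = u ∧ k = s ∧ j ≠ k
    · obtain ⟨rfl, rfl, h1⟩ := h
      rw [if_pos ⟨rfl, rfl, h1⟩, if_pos ⟨rfl, rfl, h1⟩, gc_T8 b j k h1]
    · rw [if_neg h, if_neg h]
  simp_rw [step1]
  have step2 := fun (j k s : Fin N) => gc_colA j (k = s ∧ j ≠ k)
    (fun u => (a j k * a s u) * (((N - 2).factorial : ℝ)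
      * ∑ i, ∑ l, if i ≠ l then b i l * b l i else 0))
  simp_rw [step2]
  have step3 := fun (j k : Fin N) => gc_colA k (j ≠ k)
    (fun s => (a j k * a s j) * (((N - 2).factorial : ℝ)
      * ∑ i, ∑ l, if i ≠ l then b i l * b l i else 0))
  simp_rw [step3, gc_ite_mul_zero, ← Finset.sum_mul]

lemma gc_class9 :
    (∑ j, ∑ k, ∑ s, ∑ u, if s = u ∧ j = k ∧ j ≠ s
        then (a j k * a s u) * (∑ π : Equiv.Perm (Fin N), b (π j) (π k) * b (π s) (π u)) else 0)
      = (∑ j, ∑ s, if j ≠ s then a j j * a s s else 0)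
        * (((N - 2).factorial : ℝ)
            * ∑ i, ∑ r, if i ≠ r then b i i * b r r else 0) := by
  classical
  have step1 : ∀ j k s u : Fin N, (if s = u ∧ j = k ∧ j ≠ s
        then (a j k * a s u) * (∑ π : Equiv.Perm (Fin N), b (π j) (π k) * b (π s) (π u)) else 0)
      = if s = u ∧ j = k ∧ j ≠ s then (a j k * a s u) * (((N - 2).factorial : ℝ)
            * ∑ i, ∑ r, if i ≠ r then b i i * b r r else 0) else 0 := by
    intro j k s u
    by_cases h : s = u ∧ j = k ∧ j ≠ s
    · obtain ⟨rfl, rfl, h1⟩ := h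
      rw [if_pos ⟨rfl, rfl, h1⟩, if_pos ⟨rfl, rfl, h1⟩, gc_T9 b j s h1]
    · rw [if_neg h, if_neg h]
  simp_rw [step1]
  have step2 := fun (j k s : Fin N) => gc_colA s (j = k ∧ j ≠ s)
    (fun u => (a j k * a s u) * (((N - 2).factorial : ℝ)
      * ∑ i, ∑ r, if i ≠ r then b i i * b r r else 0))
  simp_rw [step2]
  have step3 := fun (j : Fin N) => gc_colB j (fun s => j ≠ s)
    (fun k s => (a j k * a s s) * (((N - 2).factorial : ℝ)
      * ∑ i, ∑ r, if i ≠ r then b i i * b r r else 0))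
  simp_rw [step3, gc_ite_mul_zero, ← Finset.sum_mul]

lemma gc_class10 :
    (∑ j, ∑ k, ∑ s, ∑ u, if j = s ∧ j = k ∧ j ≠ u
        then (a j k * a s u) * (∑ π : Equiv.Perm (Fin N), b (π j) (π k) * b (π s) (π u)) else 0)
      = (∑ j, ∑ u, if j ≠ u then a j j * a j u else 0)
        * (((N - 2).factorial : ℝ)
            * ∑ i, ∑ t, if i ≠ t then b i i * b i t else 0) := by
  classical
  have step1 : ∀ j k s u : Fin N, (if j = s ∧ j = k ∧ j ≠ u
        then (a j k * a s u) * (∑ π : Equiv.Perm (Fin N), b (π j) (π k) * b (π s) (π u)) else 0)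
      = if j = s ∧ j = k ∧ j ≠ u then (a j k * a s u) * (((N - 2).factorial : ℝ)
            * ∑ i, ∑ t, if i ≠ t then b i i * b i t else 0) else 0 := by
    intro j k s u
    by_cases h : j = s ∧ j = k ∧ j ≠ u
    · obtain ⟨rfl, rfl, h1⟩ := h
      rw [if_pos ⟨rfl, rfl, h1⟩, if_pos ⟨rfl, rfl, h1⟩, gc_T10 b j u h1]
    · rw [if_neg h, if_neg h]
  simp_rw [step1]
  have step2 := fun (j k : Fin N) => gc_colB j (fun u => j = k ∧ j ≠ u)
    (fun s u => (a j k * a s u) * (((N - 2).factorial : ℝ)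
      * ∑ i, ∑ t, if i ≠ t then b i i * b i t else 0))
  simp_rw [step2]
  have step3 := fun (j : Fin N) => gc_colB j (fun u => j ≠ u)
    (fun k u => (a j k * a j u) * (((N - 2).factorial : ℝ)
      * ∑ i, ∑ t, if i ≠ t then b i i * b i t else 0))
  simp_rw [step3, gc_ite_mul_zero, ← Finset.sum_mul]

lemma gc_class11 :
    (∑ j, ∑ k, ∑ s, ∑ u, if j = u ∧ j = k ∧ j ≠ s
        then (a j k * a s u) * (∑ π : Equiv.Perm (Fin N), b (π j) (π k) * b (π s) (π u)) else 0)
      = (∑ j, ∑ s, if j ≠ s then a j j * a s j else 0)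
        * (((N - 2).factorial : ℝ)
            * ∑ i, ∑ r, if i ≠ r then b i i * b r i else 0) := by
  classical
  have step1 : ∀ j k s u : Fin N, (if j = u ∧ j = k ∧ j ≠ s
        then (a j k * a s u) * (∑ π : Equiv.Perm (Fin N), b (π j) (π k) * b (π s) (π u)) else 0)
      = if j = u ∧ j = k ∧ j ≠ s then (a j k * a s u) * (((N - 2).factorial : ℝ)
            * ∑ i, ∑ r, if i ≠ r then b i i * b r i else 0) else 0 := by
    intro j k s u
    by_cases h : j = u ∧ j = k ∧ j ≠ s
    · obtain ⟨rfl, rfl, h1⟩ := h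
      rw [if_pos ⟨rfl, rfl, h1⟩, if_pos ⟨rfl, rfl, h1⟩, gc_T11 b j s h1]
    · rw [if_neg h, if_neg h]
  simp_rw [step1]
  have step2 := fun (j k s : Fin N) => gc_colA j (j = k ∧ j ≠ s)
    (fun u => (a j k * a s u) * (((N - 2).factorial : ℝ)
      * ∑ i, ∑ r, if i ≠ r then b i i * b r i else 0))
  simp_rw [step2]
  have step3 := fun (j : Fin N) => gc_colB j (fun s => j ≠ s)
    (fun k s => (a j k * a s j) * (((N - 2).factorial : ℝ)
      * ∑ i, ∑ r, if i ≠ r then b i i * b r i else 0))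
  simp_rw [step3, gc_ite_mul_zero, ← Finset.sum_mul]

lemma gc_class12 :
    (∑ j, ∑ k, ∑ s, ∑ u, if j = u ∧ j = s ∧ j ≠ k
        then (a j k * a s u) * (∑ π : Equiv.Perm (Fin N), b (π j) (π k) * b (π s) (π u)) else 0)
      = (∑ j, ∑ k, if j ≠ k then a j k * a j j else 0)
        * (((N - 2).factorial : ℝ)
            * ∑ i, ∑ l, if i ≠ l then b i l * b i i else 0) := by
  classical
  have step1 : ∀ j k s u : Fin N, (if j = u ∧ j = s ∧ j ≠ k
        then (a j k * a s u) * (∑ π : Equiv.Perm (Fin N), b (π j) (π k) * b (π s) (π u)) else 0)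
      = if j = u ∧ j = s ∧ j ≠ k then (a j k * a s u) * (((N - 2).factorial : ℝ)
            * ∑ i, ∑ l, if i ≠ l then b i l * b i i else 0) else 0 := by
    intro j k s u
    by_cases h : j = u ∧ j = s ∧ j ≠ k
    · obtain ⟨rfl, rfl, h1⟩ := h
      rw [if_pos ⟨rfl, rfl, h1⟩, if_pos ⟨rfl, rfl, h1⟩, gc_T12 b j k h1]
    · rw [if_neg h, if_neg h]
  simp_rw [step1]
  have step2 := fun (j k s : Fin N) => gc_colA j (j = s ∧ j ≠ k)
    (fun u => (a j k * a s u) * (((N - 2).factorial : ℝ)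
      * ∑ i, ∑ l, if i ≠ l then b i l * b i i else 0))
  simp_rw [step2]
  have step3 := fun (j k : Fin N) => gc_colA j (j ≠ k)
    (fun s => (a j k * a s j) * (((N - 2).factorial : ℝ)
      * ∑ i, ∑ l, if i ≠ l then b i l * b i i else 0))
  simp_rw [step3, gc_ite_mul_zero, ← Finset.sum_mul]

lemma gc_class13 :
    (∑ j, ∑ k, ∑ s, ∑ u, if k = u ∧ k = s ∧ j ≠ k
        then (a j k * a s u) * (∑ π : Equiv.Perm (Fin N), b (π j) (π k) * b (π s) (π u)) else 0)
      = (∑ j, ∑ k, if j ≠ k then a j k * a k k else 0)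
        * (((N - 2).factorial : ℝ)
            * ∑ i, ∑ l, if i ≠ l then b i l * b l l else 0) := by
  classical
  have step1 : ∀ j k s u : Fin N, (if k = u ∧ k = s ∧ j ≠ k
        then (a j k * a s u) * (∑ π : Equiv.Perm (Fin N), b (π j) (π k) * b (π s) (π u)) else 0)
      = if k = u ∧ k = s ∧ j ≠ k then (a j k * a s u) * (((N - 2).factorial : ℝ)
            * ∑ i, ∑ l, if i ≠ l then b i l * b l l else 0) else 0 := by
    intro j k s u
    by_cases h : k = u ∧ k = s ∧ j ≠ k
    · obtain ⟨rfl, rfl, h1⟩ := h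
      rw [if_pos ⟨rfl, rfl, h1⟩, if_pos ⟨rfl, rfl, h1⟩, gc_T13 b j k h1]
    · rw [if_neg h, if_neg h]
  simp_rw [step1]
  have step2 := fun (j k s : Fin N) => gc_colA k (k = s ∧ j ≠ k)
    (fun u => (a j k * a s u) * (((N - 2).factorial : ℝ)
      * ∑ i, ∑ l, if i ≠ l then b i l * b l l else 0))
  simp_rw [step2]
  have step3 := fun (j k : Fin N) => gc_colA k (j ≠ k)
    (fun s => (a j k * a s k) * (((N - 2).factorial : ℝ)
      * ∑ i, ∑ l, if i ≠ l then b i l * b l l else 0))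
  simp_rw [step3, gc_ite_mul_zero, ← Finset.sum_mul]

lemma gc_class14 :
    (∑ j, ∑ k, ∑ s, ∑ u, if j = u ∧ j = s ∧ j = k
        then (a j k * a s u) * (∑ π : Equiv.Perm (Fin N), b (π j) (π k) * b (π s) (π u)) else 0)
      = (∑ j, a j j * a j j)
        * (((N - 1).factorial : ℝ) * ∑ i, b i i * b i i) := by
  classical
  have step1 : ∀ j k s u : Fin N, (if j = u ∧ j = s ∧ j = k
        then (a j k * a s u) * (∑ π : Equiv.Perm (Fin N), b (π j) (π k) * b (π s) (π u)) else 0)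
      = if j = u ∧ j = s ∧ j = k then (a j k * a s u) * (((N - 1).factorial : ℝ)
            * ∑ i, b i i * b i i) else 0 := by
    intro j k s u
    by_cases h : j = u ∧ j = s ∧ j = k
    · obtain ⟨rfl, rfl, rfl⟩ := h
      rw [if_pos ⟨rfl, rfl, rfl⟩, if_pos ⟨rfl, rfl, rfl⟩, gc_T14 b j]
    · rw [if_neg h, if_neg h]
  simp_rw [step1]
  have step2 := fun (j k s : Fin N) => gc_colA j (j = s ∧ j = k)
    (fun u => (a j k * a s u) * (((N - 1).factorial : ℝ) * ∑ i, b i i * b i i))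
  simp_rw [step2]
  have step3 := fun (j k : Fin N) => gc_colA j (j = k)
    (fun s => (a j k * a s j) * (((N - 1).factorial : ℝ) * ∑ i, b i i * b i i))
  simp_rw [step3]
  have step4 := fun (j : Fin N) => gc_colA0 j
    (fun k => (a j k * a j j) * (((N - 1).factorial : ℝ) * ∑ i, b i i * b i i))
  simp_rw [step4, ← Finset.sum_mul]
/-! ### Expanding the square of the statistic -/

lemma gc_hexp :
    (∑ π : Equiv.Perm (Fin N), (∑ i, ∑ j, a i j * b (π i) (π j)) ^ 2)
      = ∑ j, ∑ k, ∑ s, ∑ u, (a j k * a s u)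
          * (∑ π : Equiv.Perm (Fin N), b (π j) (π k) * b (π s) (π u)) := by
  classical
  have hpoint : ∀ π : Equiv.Perm (Fin N),
      (∑ i, ∑ j, a i j * b (π i) (π j)) ^ 2
        = ∑ j, ∑ k, ∑ s, ∑ u, (a j k * a s u) * (b (π j) (π k) * b (π s) (π u)) := by
    intro π
    rw [sq, Finset.sum_mul_sum]
    simp_rw [Finset.sum_mul_sum, mul_mul_mul_comm]
    exact Finset.sum_congr rfl fun j _ => Finset.sum_comm
  simp_rw [hpoint]
  rw [Finset.sum_comm]
  refine Finset.sum_congr rfl fun j _ => ?_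
  rw [Finset.sum_comm]
  refine Finset.sum_congr rfl fun k _ => ?_
  rw [Finset.sum_comm]
  refine Finset.sum_congr rfl fun s _ => ?_
  rw [Finset.sum_comm]
  exact Finset.sum_congr rfl fun u _ => (Finset.mul_sum _ _ _).symm

end GCAux
set_option maxHeartbeats 4000000 in
/-- **Exact second permutation moment, symmetric case.** All primed sums are written out
as nested sums restricted (via indicators) to pairwise distinct subscripts. -/
theorem permE_sq_gammaStat_symmetric (N : ℕ) (hN : 4 ≤ N) (a b : Fin N → Fin N → ℝ)
    (ha_symm : ∀ i j, a i j = a j i) (hb_symm : ∀ i j, b i j = b j i) :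
    permE N (fun π => (gammaStat N a b π) ^ 2) =
      (((N - 4).factorial : ℝ) / (N.factorial : ℝ))
        * (∑ j, ∑ k, ∑ s, ∑ u,
            if j ≠ k ∧ j ≠ s ∧ j ≠ u ∧ k ≠ s ∧ k ≠ u ∧ s ≠ u then a j k * a s u else 0)
        * (∑ i, ∑ l, ∑ r, ∑ t,
            if i ≠ l ∧ i ≠ r ∧ i ≠ t ∧ l ≠ r ∧ l ≠ t ∧ r ≠ t then b i l * b r t else 0)
      + (4 * ((N - 3).factorial : ℝ) / (N.factorial : ℝ))
        * (∑ j, ∑ k, ∑ u, if j ≠ k ∧ j ≠ u ∧ k ≠ u then a j k * a j u else 0)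
        * (∑ i, ∑ l, ∑ t, if i ≠ l ∧ i ≠ t ∧ l ≠ t then b i l * b i t else 0)
      + (2 * ((N - 3).factorial : ℝ) / (N.factorial : ℝ))
        * (∑ j, ∑ s, ∑ u, if j ≠ s ∧ j ≠ u ∧ s ≠ u then a j j * a s u else 0)
        * (∑ i, ∑ r, ∑ t, if i ≠ r ∧ i ≠ t ∧ r ≠ t then b i i * b r t else 0)
      + (2 * ((N - 2).factorial : ℝ) / (N.factorial : ℝ))
        * (∑ j, ∑ k, if j ≠ k then (a j k) ^ 2 else 0)
        * (∑ i, ∑ l, if i ≠ l then (b i l) ^ 2 else 0)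
      + (((N - 2).factorial : ℝ) / (N.factorial : ℝ))
        * (∑ j, ∑ s, if j ≠ s then a j j * a s s else 0)
        * (∑ i, ∑ r, if i ≠ r then b i i * b r r else 0)
      + (4 * ((N - 2).factorial : ℝ) / (N.factorial : ℝ))
        * (∑ j, ∑ u, if j ≠ u then a j j * a j u else 0)
        * (∑ i, ∑ t, if i ≠ t then b i i * b i t else 0)
      + (((N - 1).factorial : ℝ) / (N.factorial : ℝ))
        * (∑ j, (a j j) ^ 2) * (∑ i, (b i i) ^ 2) := by
  classical
  have hfac : (N.factorial : ℝ) ≠ 0 := Nat.cast_ne_zero.mpr (Nat.factorial_ne_zero N)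
  have e3 : (∑ π : Equiv.Perm (Fin N), (gammaStat N a b π) ^ 2)
      = (∑ j, ∑ k, ∑ s, ∑ u, if j ≠ k ∧ j ≠ s ∧ j ≠ u ∧ k ≠ s ∧ k ≠ u ∧ s ≠ u
            then a j k * a s u else 0)
          * (((N - 4).factorial : ℝ) * ∑ i, ∑ l, ∑ r, ∑ t,
              if i ≠ l ∧ i ≠ r ∧ i ≠ t ∧ l ≠ r ∧ l ≠ t ∧ r ≠ t then b i l * b r t else 0)
        + (∑ j, ∑ k, ∑ u, if j ≠ k ∧ j ≠ u ∧ k ≠ u then a j k * a j u else 0)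
          * (((N - 3).factorial : ℝ)
              * ∑ i, ∑ l, ∑ t, if i ≠ l ∧ i ≠ t ∧ l ≠ t then b i l * b i t else 0)
        + (∑ j, ∑ k, ∑ u, if j ≠ k ∧ j ≠ u ∧ k ≠ u then a j k * a j u else 0)
          * (((N - 3).factorial : ℝ)
              * ∑ i, ∑ l, ∑ t, if i ≠ l ∧ i ≠ t ∧ l ≠ t then b i l * b i t else 0)
        + (∑ j, ∑ k, ∑ u, if j ≠ k ∧ j ≠ u ∧ k ≠ u then a j k * a j u else 0)
          * (((N - 3).factorial : ℝ)
              * ∑ i, ∑ l, ∑ t, if i ≠ l ∧ i ≠ t ∧ l ≠ t then b i l * b i t else 0)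
        + (∑ j, ∑ k, ∑ u, if j ≠ k ∧ j ≠ u ∧ k ≠ u then a j k * a j u else 0)
          * (((N - 3).factorial : ℝ)
              * ∑ i, ∑ l, ∑ t, if i ≠ l ∧ i ≠ t ∧ l ≠ t then b i l * b i t else 0)
        + (∑ j, ∑ s, ∑ u, if j ≠ s ∧ j ≠ u ∧ s ≠ u then a j j * a s u else 0)
          * (((N - 3).factorial : ℝ)
              * ∑ i, ∑ r, ∑ t, if i ≠ r ∧ i ≠ t ∧ r ≠ t then b i i * b r t else 0)
        + (∑ j, ∑ s, ∑ u, if j ≠ s ∧ j ≠ u ∧ s ≠ u then a j j * a s u else 0)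
          * (((N - 3).factorial : ℝ)
              * ∑ i, ∑ r, ∑ t, if i ≠ r ∧ i ≠ t ∧ r ≠ t then b i i * b r t else 0)
        + (∑ j, ∑ k, if j ≠ k then (a j k) ^ 2 else 0)
          * (((N - 2).factorial : ℝ) * ∑ i, ∑ l, if i ≠ l then (b i l) ^ 2 else 0)
        + (∑ j, ∑ k, if j ≠ k then (a j k) ^ 2 else 0)
          * (((N - 2).factorial : ℝ) * ∑ i, ∑ l, if i ≠ l then (b i l) ^ 2 else 0)
        + (∑ j, ∑ s, if j ≠ s then a j j * a s s else 0)
          * (((N - 2).factorial : ℝ) * ∑ i, ∑ r, if i ≠ r then b i i * b r r else 0)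
        + (∑ j, ∑ u, if j ≠ u then a j j * a j u else 0)
          * (((N - 2).factorial : ℝ) * ∑ i, ∑ t, if i ≠ t then b i i * b i t else 0)
        + (∑ j, ∑ u, if j ≠ u then a j j * a j u else 0)
          * (((N - 2).factorial : ℝ) * ∑ i, ∑ t, if i ≠ t then b i i * b i t else 0)
        + (∑ j, ∑ u, if j ≠ u then a j j * a j u else 0)
          * (((N - 2).factorial : ℝ) * ∑ i, ∑ t, if i ≠ t then b i i * b i t else 0)
        + (∑ j, ∑ u, if j ≠ u then a j j * a j u else 0)
          * (((N - 2).factorial : ℝ) * ∑ i, ∑ t, if i ≠ t then b i i * b i t else 0)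
        + (∑ j, (a j j) ^ 2) * (((N - 1).factorial : ℝ) * ∑ i, (b i i) ^ 2) := by
    simp only [gammaStat]
    rw [gc_hexp a b]
    refine Eq.trans (Finset.sum_congr rfl fun j _ => Finset.sum_congr rfl fun k _ =>
      Finset.sum_congr rfl fun s _ => Finset.sum_congr rfl fun u _ =>
      gc_class_split j k s u _) ?_
    simp_rw (config := { maxSteps := 100000000 }) [Finset.sum_add_distrib]
    rw [gc_class0 a b, gc_class1 a b, gc_class2 a b, gc_class3 a b, gc_class4 a b,
      gc_class5 a b, gc_class6 a b, gc_class7 a b, gc_class8 a b, gc_class9 a b,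
      gc_class10 a b, gc_class11 a b, gc_class12 a b, gc_class13 a b, gc_class14 a b,
      gc_m2 ha_symm, gc_m2 hb_symm, gc_m3 ha_symm, gc_m3 hb_symm,
      gc_m4 ha_symm, gc_m4 hb_symm, gc_m6 (c := a), gc_m6 (c := b),
      gc_m7 (c := a), gc_m7 (c := b), gc_m8 ha_symm, gc_m8 hb_symm,
      gc_m11 ha_symm, gc_m11 hb_symm, gc_m12 (c := a), gc_m12 (c := b),
      gc_m13 ha_symm, gc_m13 hb_symm, gc_m14 (c := a), gc_m14 (c := b)]
  rw [show permE N (fun π => gammaStat N a b π ^ 2)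
      = (∑ π : Equiv.Perm (Fin N), gammaStat N a b π ^ 2) / (N.factorial : ℝ) from rfl, e3]
  field_simp
  ring
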